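/- Let p ≥ 1 and let A be a p×p real matrix whose vertices are listed in a topological order, i.e. A i j ≠ 0 implies i < j (so A is the weighted adjacency matrix of a DAG and I − A is invertible). Let D be a diagonal p×p matrix with strictly positive diagonal entries σ_i² (the error variances), and define the covariance matrix Σ = (I − Aᵀ)⁻¹ D (I − A)⁻¹, the inverse covariance matrix P = Σ⁻¹, and the normalized inverse covariance matrix Ω with entries Ω_{ij} = P_{ij} / √(P_{ii} P_{jj}). Let G_M be the moral graph of A. If G_M is acyclic (a tree or forest), then every real eigenvalue of Ω (every element of the real spectrum of Ω) is at most 2. -/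

import Mathlib

open Matrix

namespace ForestAux

variable {V : Type*} {G : SimpleGraph V}

lemma walk_split {x y a b : V} (w : G.Walk x y) (h : s(a, b) ∈ w.edges) :
    (∃ (w₁ : G.Walk x a) (w₂ : G.Walk b y), w.length = w₁.length + w₂.length + 1) ∨
    (∃ (w₁ : G.Walk x b) (w₂ : G.Walk a y), w.length = w₁.length + w₂.length + 1) := by
  induction w with
  | nil => simp at h
  | @cons u c y h' w' ih =>
    rw [SimpleGraph.Walk.edges_cons, List.mem_cons] at h
    rcases h with h | h
    · rw [Sym2.eq_iff] at h
      rcases h with ⟨rfl, rfl⟩ | ⟨rfl, rfl⟩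
      · exact Or.inl ⟨SimpleGraph.Walk.nil, w', by simp⟩
      · exact Or.inr ⟨SimpleGraph.Walk.nil, w', by simp⟩
    · rcases ih h with ⟨w₁, w₂, hl⟩ | ⟨w₁, w₂, hl⟩
      · exact Or.inl ⟨SimpleGraph.Walk.cons h' w₁, w₂, by simp [hl]; omega⟩
      · exact Or.inr ⟨SimpleGraph.Walk.cons h' w₁, w₂, by simp [hl]; omega⟩

lemma even_closed (hG : G.IsAcyclic) :
    ∀ n (v : V) (w : G.Walk v v), w.length = n → Even n := by
  intro n
  induction n using Nat.strong_induction_on with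
  | _ n ih =>
    intro v w hw
    cases w with
    | nil => subst hw; simp
    | @cons _ u _ h q =>
      have hbridge := (SimpleGraph.isAcyclic_iff_forall_adj_isBridge.mp hG) h
      rw [SimpleGraph.isBridge_iff_adj_and_forall_walk_mem_edges] at hbridge
      have hmem : s(v, u) ∈ q.edges := by
        have := hbridge q.reverse
        rwa [SimpleGraph.Walk.edges_reverse, List.mem_reverse] at this
      simp only [SimpleGraph.Walk.length_cons] at hw
      rcases walk_split q hmem with ⟨w₁, w₂, hl⟩ | ⟨w₁, w₂, hl⟩
      · -- w₁ : u → v, w₂ : u → v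
        have h1 : Even (w₁.length + 1) :=
          ih (w₁.length + 1) (by omega) v (SimpleGraph.Walk.cons h w₁) (by simp)
        have h2 : Even (w₂.length + 1) :=
          ih (w₂.length + 1) (by omega) v (SimpleGraph.Walk.cons h w₂) (by simp)
        simp only [Nat.even_iff] at h1 h2 ⊢
        omega
      · -- w₁ : u → u, w₂ : v → v
        have h1 : Even w₁.length := ih w₁.length (by omega) u w₁ rfl
        have h2 : Even w₂.length := ih w₂.length (by omega) v w₂ rfl
        simp only [Nat.even_iff] at h1 h2 ⊢
        omega

lemma parity_invariance (hG : G.IsAcyclic) {x y : V} (w₁ w₂ : G.Walk x y) :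
    Even (w₁.length + w₂.length) := by
  have := even_closed hG (w₁.append w₂.reverse).length x (w₁.append w₂.reverse) rfl
  simpa using this

lemma exists_sign (hG : G.IsAcyclic) :
    ∃ s : V → ℝ, (∀ v, s v = 1 ∨ s v = -1) ∧ ∀ u v, G.Adj u v → s u * s v = -1 := by
  classical
  let root : V → V := fun v => (G.connectedComponentMk v).out
  have hreach : ∀ v, G.Reachable (root v) v := fun v =>
    (SimpleGraph.ConnectedComponent.eq.mp ((G.connectedComponentMk v).out_eq))
  let w : ∀ v, G.Walk (root v) v := fun v => (hreach v).some
  refine ⟨fun v => if Even (w v).length then 1 else -1, fun v => ?_, ?_⟩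
  · by_cases h : Even (w v).length <;> simp [h]
  intro u v hadj
  have hroot : root u = root v := by
    simp only [root]
    congr 1
    exact SimpleGraph.ConnectedComponent.eq.mpr hadj.reachable
  have key : Even ((((w u).copy hroot rfl).concat hadj).length + (w v).length) :=
    parity_invariance hG _ _
  rw [SimpleGraph.Walk.length_concat, SimpleGraph.Walk.length_copy] at key
  have hne : Even (w u).length ↔ ¬ Even (w v).length := by
    simp only [Nat.even_iff, Nat.not_even_iff] at key ⊢
    omega
  by_cases h1 : Even (w u).length
  · simp [h1, hne.mp h1]
  · have h2 : Even (w v).length := by tauto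
    simp [h1, h2]

end ForestAux

/-- The moral graph of a `p × p` matrix `A`: distinct vertices `i` and `j` are adjacent iff
`A i j ≠ 0`, or `A j i ≠ 0`, or they share a common child `k` with `A i k ≠ 0` and `A j k ≠ 0`. -/
def moralGraph {p : ℕ} (A : Matrix (Fin p) (Fin p) ℝ) : SimpleGraph (Fin p) :=
  SimpleGraph.fromRel (fun i j => A i j ≠ 0 ∨ ∃ k, A i k ≠ 0 ∧ A j k ≠ 0)

theorem max_eigenvalue_le_two_of_moral_acyclic
    {p : ℕ} (hp : 1 ≤ p) (A : Matrix (Fin p) (Fin p) ℝ)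
    (htopo : ∀ i j, A i j ≠ 0 → i < j)
    (σsq : Fin p → ℝ) (hσ : ∀ i, 0 < σsq i)
    (Cov : Matrix (Fin p) (Fin p) ℝ)
    (hCov : Cov = (1 - Aᵀ)⁻¹ * Matrix.diagonal σsq * (1 - A)⁻¹)
    (P : Matrix (Fin p) (Fin p) ℝ) (hP : P = Cov⁻¹)
    (Ω : Matrix (Fin p) (Fin p) ℝ)
    (hΩ : ∀ i j, Ω i j = P i j / Real.sqrt (P i i * P j j))
    (hacyclic : (moralGraph A).IsAcyclic) :
    ∀ lam ∈ spectrum ℝ Ω, lam ≤ 2 := by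
  classical
  set Y : Matrix (Fin p) (Fin p) ℝ := 1 - A with hYdef
  have hA0 : ∀ i j : Fin p, ¬ i < j → A i j = 0 := fun i j h => by
    by_contra h'; exact h (htopo i j h')
  have hAdiag : ∀ i, A i i = 0 := fun i => hA0 i i (lt_irrefl i)
  have hYdiag : ∀ i, Y i i = 1 := fun i => by
    simp [hYdef, Matrix.sub_apply, hAdiag]
  have hYtri : Y.BlockTriangular id := by
    intro i j hij
    simp only [hYdef, Matrix.sub_apply]
    rw [Matrix.one_apply_ne (by exact fun h => absurd h.symm (ne_of_lt hij)),
      hA0 i j (by exact fun h => absurd (lt_trans hij h) (lt_irrefl _))]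
    ring
  have hdetY : Y.det = 1 := by
    rw [Matrix.det_of_upperTriangular hYtri]
    simp [hYdiag]
  have hYunit : IsUnit Y.det := by rw [hdetY]; exact isUnit_one
  have hXY : (1 - Aᵀ) = Yᵀ := by rw [hYdef, Matrix.transpose_sub, Matrix.transpose_one]
  have hXunit : IsUnit (Yᵀ).det := by rw [Matrix.det_transpose, hdetY]; exact isUnit_one
  have hPform : P = Y * Matrix.diagonal (fun i => (σsq i)⁻¹) * Yᵀ := by
    rw [hP, hCov, hXY]
    have hdinv : (Matrix.diagonal σsq)⁻¹ = Matrix.diagonal (fun i => (σsq i)⁻¹) :=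
      Matrix.inv_eq_right_inv (by
        rw [Matrix.diagonal_mul_diagonal]
        convert Matrix.diagonal_one using 2
        funext i
        exact mul_inv_cancel₀ (hσ i).ne')
    rw [Matrix.mul_inv_rev, Matrix.mul_inv_rev,
      Matrix.nonsing_inv_nonsing_inv _ hYunit, Matrix.nonsing_inv_nonsing_inv _ hXunit,
      hdinv, ← Matrix.mul_assoc]
  have hPentry : ∀ i j, P i j = ∑ k, Y i k * (σsq k)⁻¹ * Y j k := by
    intro i j
    rw [hPform, Matrix.mul_apply]
    refine Finset.sum_congr rfl fun k _ => ?_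
    rw [Matrix.mul_diagonal, Matrix.transpose_apply]
  have hPdiag : ∀ i, 0 < P i i := by
    intro i
    rw [hPentry]
    apply Finset.sum_pos' (fun k _ => by nlinarith [sq_nonneg (Y i k), inv_nonneg.mpr (hσ k).le])
    exact ⟨i, Finset.mem_univ i, by rw [hYdiag]; simpa using inv_pos.mpr (hσ i)⟩
  have hΩdiag : ∀ i, Ω i i = 1 := fun i => by
    rw [hΩ, Real.sqrt_mul_self (hPdiag i).le, div_self (hPdiag i).ne']
  have hYne : ∀ a b : Fin p, Y a b ≠ 0 → a = b ∨ A a b ≠ 0 := by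
    intro a b h
    by_cases hab : a = b
    · exact Or.inl hab
    · refine Or.inr fun h0 => h ?_
      simp [hYdef, Matrix.sub_apply, Matrix.one_apply_ne hab, h0]
  have hadj_of : ∀ i j : Fin p, i ≠ j → P i j ≠ 0 → (moralGraph A).Adj i j := by
    intro i j hne hP0
    rw [hPentry] at hP0
    obtain ⟨k, -, hk⟩ := Finset.exists_ne_zero_of_sum_ne_zero hP0
    have hYik : Y i k ≠ 0 := fun h => hk (by rw [h]; ring)
    have hYjk : Y j k ≠ 0 := fun h => hk (by rw [h]; ring)
    rw [moralGraph, SimpleGraph.fromRel_adj]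
    refine ⟨hne, ?_⟩
    rcases hYne i k hYik with rfl | hAik
    · rcases hYne j i hYjk with h | hAji
      · exact absurd h.symm hne
      · exact Or.inr (Or.inl hAji)
    · rcases hYne j k hYjk with rfl | hAjk
      · exact Or.inl (Or.inl hAik)
      · exact Or.inl (Or.inr ⟨k, hAik, hAjk⟩)
  have hΩoff : ∀ i j : Fin p, i ≠ j → ¬ (moralGraph A).Adj i j → Ω i j = 0 := by
    intro i j hne hnadj
    have hPij : P i j = 0 := by
      by_contra h; exact hnadj (hadj_of i j hne h)
    rw [hΩ, hPij, zero_div]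
  -- positive semidefiniteness of Ω
  have hPpsd : P.PosSemidef := by
    rw [hPform]
    have hd : (Matrix.diagonal (fun i => (σsq i)⁻¹)).PosSemidef :=
      Matrix.PosSemidef.diagonal (fun i => inv_nonneg.mpr (hσ i).le)
    have := hd.mul_mul_conjTranspose_same Y
    rwa [Matrix.conjTranspose_eq_transpose_of_trivial] at this
  have hΩform : Ω = Matrix.diagonal (fun i => (Real.sqrt (P i i))⁻¹) * P *
      Matrix.diagonal (fun i => (Real.sqrt (P i i))⁻¹) := by
    ext i j
    rw [hΩ, Matrix.mul_diagonal, Matrix.diagonal_mul, Real.sqrt_mul (hPdiag i).le]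
    have h1 := Real.sqrt_pos.mpr (hPdiag i)
    have h2 := Real.sqrt_pos.mpr (hPdiag j)
    field_simp
  have hΩpsd : ∀ x : Fin p → ℝ, 0 ≤ x ⬝ᵥ (Ω *ᵥ x) := by
    intro x
    have hD0 : (Matrix.diagonal (fun i => (Real.sqrt (P i i))⁻¹))ᴴ =
        Matrix.diagonal (fun i => (Real.sqrt (P i i))⁻¹) := by
      rw [Matrix.diagonal_conjTranspose]
      simp
    have := (hPpsd.mul_mul_conjTranspose_same
      (Matrix.diagonal (fun i => (Real.sqrt (P i i))⁻¹))).dotProduct_mulVec_nonneg x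
    rw [hD0, ← hΩform] at this
    simpa using this
  -- main argument
  intro lam hlam
  rw [spectrum.mem_iff] at hlam
  have hdet : (algebraMap ℝ (Matrix (Fin p) (Fin p) ℝ) lam - Ω).det = 0 := by
    by_contra h
    exact hlam ((Matrix.isUnit_iff_isUnit_det _).mpr (isUnit_iff_ne_zero.mpr h))
  obtain ⟨v, hv0, hv⟩ := Matrix.exists_mulVec_eq_zero_iff.mpr hdet
  have hΩv : Ω *ᵥ v = lam • v := by
    rw [Matrix.sub_mulVec, Algebra.algebraMap_eq_smul_one, Matrix.smul_mulVec,
      Matrix.one_mulVec, sub_eq_zero] at hv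
    exact hv.symm
  obtain ⟨s, hs1, hs2⟩ := ForestAux.exists_sign hacyclic
  have hssq : ∀ i, s i * s i = 1 := fun i => by rcases hs1 i with h | h <;> rw [h] <;> ring
  have hs0 : ∀ i, s i ≠ 0 := fun i => by rcases hs1 i with h | h <;> rw [h] <;> norm_num
  set u : Fin p → ℝ := fun i => s i * v i with hu
  have hu0 : ∃ i, u i ≠ 0 := by
    obtain ⟨i, hi⟩ := Function.ne_iff.mp hv0
    exact ⟨i, mul_ne_zero (hs0 i) (by simpa using hi)⟩
  have hΩveq : ∀ i, ∑ j, Ω i j * v j = lam * v i := by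
    intro i
    have := congrFun hΩv i
    simpa [Matrix.mulVec, dotProduct] using this
  have hΩu : Ω *ᵥ u = (2 - lam) • u := by
    funext i
    have hsum : ∀ j, Ω i j * u j = s i * ((if j = i then 2 * v j else 0) - Ω i j * v j) := by
      intro j
      by_cases hji : j = i
      · subst hji
        rw [if_pos rfl, hΩdiag j]
        ring
      · rw [if_neg hji]
        by_cases hadj : (moralGraph A).Adj i j
        · have h2 : s i * s j = -1 := hs2 i j hadj
          have h3 : s j = -s i := by
            rcases hs1 i with hi | hi <;> rcases hs1 j with hj | hj <;>
              rw [hi, hj] at h2 ⊢ <;> linarith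
          simp only [hu]
          rw [h3]; ring
        · rw [hΩoff i j (fun h => hji h.symm) hadj]
          ring
    have : (Ω *ᵥ u) i = ∑ j, Ω i j * u j := by
      simp [Matrix.mulVec, dotProduct]
    rw [this, Finset.sum_congr rfl (fun j _ => hsum j), ← Finset.mul_sum,
      Finset.sum_sub_distrib, Finset.sum_ite_eq' Finset.univ i (fun j => 2 * v j)]
    rw [if_pos (Finset.mem_univ i), hΩveq i]
    simp only [Pi.smul_apply, smul_eq_mul, hu]
    ring
  have h1 : 0 ≤ u ⬝ᵥ (Ω *ᵥ u) := hΩpsd u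
  rw [hΩu] at h1
  have h2 : u ⬝ᵥ ((2 - lam) • u) = (2 - lam) * (u ⬝ᵥ u) := by
    rw [dotProduct_smul]; simp
  rw [h2] at h1
  have h3 : 0 < u ⬝ᵥ u := by
    obtain ⟨i, hi⟩ := hu0
    apply Finset.sum_pos' (fun k _ => mul_self_nonneg (u k))
    exact ⟨i, Finset.mem_univ i, mul_self_pos.mpr hi⟩
  nlinarith
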